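/- Let L_Ω be the Lie derivative f ↦ {H_Ω, f} acting on homogeneous polynomials, with kernel N^(s) and range R^(s) on the space P^(s) of homogeneous polynomials of degree s. Let f ∈ P^(s) and g ∈ P^(r). Then: if f ∈ N^(s) and g ∈ N^(r), then {f,g} ∈ N^(r+s−2); if f ∈ N^(s) and g ∈ R^(r), or f ∈ R^(s) and g ∈ N^(r), then {f,g} ∈ R^(r+s−2). -/

import Mathlib

open MvPolynomial

/-- Polynomials in the `2N` phase-space variables `x_0,…,x_{N−1},y_0,…,y_{N−1}`:
`Sum.inl l` is the variable `x_l` and `Sum.inr l` is `y_l`. -/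
abbrev Pol (N : ℕ) := MvPolynomial (Fin N ⊕ Fin N) ℝ

/-- Poisson bracket `{f,g} = Σ_l (∂f/∂x_l ∂g/∂y_l − ∂f/∂y_l ∂g/∂x_l)`. -/
noncomputable def pbracket {N : ℕ} (f g : Pol N) : Pol N :=
  ∑ l : Fin N,
    (pderiv (Sum.inl l) f * pderiv (Sum.inr l) g -
      pderiv (Sum.inr l) f * pderiv (Sum.inl l) g)

/-- The quadratic form `H_Ω = (Ω/2) Σ_j (x_j² + y_j²)` as a polynomial. -/
noncomputable def HOmega (N : ℕ) (Ω : ℝ) : Pol N :=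
  C (Ω / 2) * ∑ j : Fin N, ((X (Sum.inl j)) ^ 2 + (X (Sum.inr j)) ^ 2)

/-- Lie derivative `L_Ω f := {H_Ω, f}`. -/
noncomputable def lOm (N : ℕ) (Ω : ℝ) (f : Pol N) : Pol N := pbracket (HOmega N Ω) f

/-- Membership in the kernel `N^(s)` of `L_Ω` on homogeneous polynomials of degree `s`. -/
def inKer (N : ℕ) (Ω : ℝ) (s : ℕ) (f : Pol N) : Prop :=
  f.IsHomogeneous s ∧ lOm N Ω f = 0

/-- Membership in the range `R^(s) = L_Ω(P^(s))`. -/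
def inRan (N : ℕ) (Ω : ℝ) (s : ℕ) (f : Pol N) : Prop :=
  ∃ g : Pol N, g.IsHomogeneous s ∧ lOm N Ω g = f

/-- composition table of the Poisson bracket with respect to the kernel
and range of `L_Ω`: `{N^(s), N^(r)} ⊆ N^(r+s−2)`, `{N^(s), R^(r)} ⊆ R^(r+s−2)` and
`{R^(s), N^(r)} ⊆ R^(r+s−2)`. -/



-- pderiv commutes
lemma pderiv_comm' {σ : Type*} [DecidableEq σ] (i j : σ) (f : MvPolynomial σ ℝ) :
    pderiv i (pderiv j f) = pderiv j (pderiv i f) := by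
  induction f using MvPolynomial.induction_on' with
  | add p q hp hq => simp [map_add, hp, hq]
  | monomial s a =>
    simp only [pderiv_monomial]
    by_cases h : i = j
    · subst h; rfl
    · rw [tsub_right_comm]
      congr 1
      rw [Finsupp.tsub_apply, Finsupp.tsub_apply, Finsupp.single_apply, Finsupp.single_apply,
        if_neg h, if_neg (fun hh => h hh.symm)]
      simp only [Nat.sub_zero]
      ring

lemma degree_sub_single {σ : Type*} (i : σ) (v : σ →₀ ℕ) (hv : v i ≠ 0) :
    (v - Finsupp.single i 1).degree = v.degree - 1 := by
  classical
  have h1 : Finsupp.single i 1 ≤ v := by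
    intro j
    rw [Finsupp.single_apply]
    split
    · rename_i hij; subst hij; omega
    · omega
  have h2 : (v - Finsupp.single i 1) + Finsupp.single i 1 = v := tsub_add_cancel_of_le h1
  have hdeg : ∀ a b : σ →₀ ℕ, (a + b).degree = a.degree + b.degree := by
    intro a b
    simp only [Finsupp.degree_eq_weight_one]
    exact map_add _ _ _
  have h3 := hdeg (v - Finsupp.single i 1) (Finsupp.single i 1)
  rw [h2] at h3
  have h4 : (Finsupp.single i 1 : σ →₀ ℕ).degree = 1 := by
    rw [Finsupp.degree_single]
  omega

lemma IsHomogeneous.pderiv' {σ : Type*} [DecidableEq σ] {f : MvPolynomial σ ℝ} {n : ℕ}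
    (h : f.IsHomogeneous n) (i : σ) : (pderiv i f).IsHomogeneous (n - 1) := by
  conv_lhs => rw [f.as_sum]
  rw [map_sum]
  apply IsHomogeneous.sum
  intro v hv
  simp only [pderiv_monomial]
  by_cases hvi : v i = 0
  · simp [hvi, isHomogeneous_zero]
  · apply isHomogeneous_monomial
    rw [degree_sub_single i v hvi]
    have := h (mem_support_iff.mp hv)
    have : v.degree = n := by rw [Finsupp.degree_eq_weight_one]; exact this
    omega

section Aux

lemma pderiv_eq_zero_of_hom0 {σ : Type*} {f : MvPolynomial σ ℝ}
    (h : f.IsHomogeneous 0) (i : σ) : pderiv i f = 0 := by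
  conv_lhs => rw [f.as_sum]
  rw [map_sum]
  apply Finset.sum_eq_zero
  intro v hv
  have hv0 : v = 0 := by
    have h2 := h (mem_support_iff.mp hv)
    have h2' : v.degree = 0 := by rw [Finsupp.degree_eq_weight_one]; exact h2
    exact (Finsupp.degree_eq_zero_iff v).mp h2'
  subst hv0
  simp [pderiv_monomial]

lemma pbracket_isHomogeneous {N : ℕ} {f g : Pol N} {s r : ℕ}
    (hf : f.IsHomogeneous s) (hg : g.IsHomogeneous r) :
    (pbracket f g).IsHomogeneous (r + s - 2) := by
  rcases Nat.eq_zero_or_pos s with hs | hs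
  · subst hs
    have hz : pbracket f g = 0 := by
      unfold pbracket
      apply Finset.sum_eq_zero
      intro l _
      rw [pderiv_eq_zero_of_hom0 hf, pderiv_eq_zero_of_hom0 hf]
      ring
    rw [hz]; exact isHomogeneous_zero _ _ _
  rcases Nat.eq_zero_or_pos r with hr | hr
  · subst hr
    have hz : pbracket f g = 0 := by
      unfold pbracket
      apply Finset.sum_eq_zero
      intro l _
      rw [pderiv_eq_zero_of_hom0 hg, pderiv_eq_zero_of_hom0 hg]
      ring
    rw [hz]; exact isHomogeneous_zero _ _ _
  · have key : r + s - 2 = (s - 1) + (r - 1) := by omega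
    rw [key]
    unfold pbracket
    apply IsHomogeneous.sum
    intro l _
    exact ((IsHomogeneous.pderiv' hf _).mul (IsHomogeneous.pderiv' hg _)).sub
      ((IsHomogeneous.pderiv' hf _).mul (IsHomogeneous.pderiv' hg _))

noncomputable def Dop (N : ℕ) (f : Pol N) : Pol N :=
  ∑ j : Fin N, (X (Sum.inl j) * pderiv (Sum.inr j) f - X (Sum.inr j) * pderiv (Sum.inl j) f)

lemma Dop_sum {N : ℕ} {ι : Type*} (s : Finset ι) (h : ι → Pol N) :
    Dop N (∑ l ∈ s, h l) = ∑ l ∈ s, Dop N (h l) := by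
  unfold Dop
  simp only [map_sum, Finset.mul_sum, ← Finset.sum_sub_distrib]
  rw [Finset.sum_comm]

lemma Dop_mul {N : ℕ} (f g : Pol N) : Dop N (f * g) = Dop N f * g + f * Dop N g := by
  unfold Dop
  rw [Finset.sum_mul, Finset.mul_sum, ← Finset.sum_add_distrib]
  apply Finset.sum_congr rfl
  intro j _
  rw [pderiv_mul, pderiv_mul]
  ring

lemma Dop_sub {N : ℕ} (f g : Pol N) : Dop N (f - g) = Dop N f - Dop N g := by
  unfold Dop
  rw [← Finset.sum_sub_distrib]
  apply Finset.sum_congr rfl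
  intro j _
  rw [map_sub, map_sub]
  ring

lemma pderiv_Dop_inl {N : ℕ} (l : Fin N) (f : Pol N) :
    pderiv (Sum.inl l) (Dop N f) =
      Dop N (pderiv (Sum.inl l) f) + pderiv (Sum.inr l) f := by
  have step : ∀ j : Fin N,
      pderiv (Sum.inl l) (X (Sum.inl j) * pderiv (Sum.inr j) f - X (Sum.inr j) * pderiv (Sum.inl j) f)
      = (if l = j then pderiv (Sum.inr l) f else 0) +
        (X (Sum.inl j) * pderiv (Sum.inr j) (pderiv (Sum.inl l) f) -
          X (Sum.inr j) * pderiv (Sum.inl j) (pderiv (Sum.inl l) f)) := by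
    intro j
    rw [map_sub, pderiv_mul, pderiv_mul, pderiv_comm' (Sum.inl l) (Sum.inr j),
      pderiv_comm' (Sum.inl l) (Sum.inl j),
      pderiv_X_of_ne (show (Sum.inr j : Fin N ⊕ Fin N) ≠ Sum.inl l by simp)]
    by_cases h : l = j
    · subst h
      rw [pderiv_X_self, if_pos rfl]
      ring
    · rw [pderiv_X_of_ne (show (Sum.inl j : Fin N ⊕ Fin N) ≠ Sum.inl l by simp [Ne.symm h]),
        if_neg h]
      ring
  unfold Dop
  rw [map_sum, Finset.sum_congr rfl (fun j _ => step j), Finset.sum_add_distrib,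
    Finset.sum_ite_eq Finset.univ l (fun _ => pderiv (Sum.inr l) f),
    if_pos (Finset.mem_univ l)]
  ring

lemma pderiv_Dop_inr {N : ℕ} (l : Fin N) (f : Pol N) :
    pderiv (Sum.inr l) (Dop N f) =
      Dop N (pderiv (Sum.inr l) f) - pderiv (Sum.inl l) f := by
  have step : ∀ j : Fin N,
      pderiv (Sum.inr l) (X (Sum.inl j) * pderiv (Sum.inr j) f - X (Sum.inr j) * pderiv (Sum.inl j) f)
      = (X (Sum.inl j) * pderiv (Sum.inr j) (pderiv (Sum.inr l) f) -
          X (Sum.inr j) * pderiv (Sum.inl j) (pderiv (Sum.inr l) f)) -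
        (if l = j then pderiv (Sum.inl l) f else 0) := by
    intro j
    rw [map_sub, pderiv_mul, pderiv_mul, pderiv_comm' (Sum.inr l) (Sum.inr j),
      pderiv_comm' (Sum.inr l) (Sum.inl j),
      pderiv_X_of_ne (show (Sum.inl j : Fin N ⊕ Fin N) ≠ Sum.inr l by simp)]
    by_cases h : l = j
    · subst h
      rw [pderiv_X_self, if_pos rfl]
      ring
    · rw [pderiv_X_of_ne (show (Sum.inr j : Fin N ⊕ Fin N) ≠ Sum.inr l by simp [Ne.symm h]),
        if_neg h]
      ring
  unfold Dop
  rw [map_sum, Finset.sum_congr rfl (fun j _ => step j), Finset.sum_sub_distrib,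
    Finset.sum_ite_eq Finset.univ l (fun _ => pderiv (Sum.inl l) f),
    if_pos (Finset.mem_univ l)]

lemma Dop_pbracket {N : ℕ} (f g : Pol N) :
    Dop N (pbracket f g) = pbracket (Dop N f) g + pbracket f (Dop N g) := by
  unfold pbracket
  rw [Dop_sum, ← Finset.sum_add_distrib]
  apply Finset.sum_congr rfl
  intro l _
  rw [Dop_sub, Dop_mul, Dop_mul, pderiv_Dop_inl, pderiv_Dop_inr, pderiv_Dop_inl, pderiv_Dop_inr]
  ring

end Aux

lemma pderiv_HOmega_inl {N : ℕ} (Ω : ℝ) (l : Fin N) :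
    pderiv (Sum.inl l) (HOmega N Ω) = C Ω * X (Sum.inl l) := by
  unfold HOmega
  rw [pderiv_C_mul, map_sum]
  have step : ∀ j : Fin N, pderiv (Sum.inl l) ((X (Sum.inl j) : Pol N) ^ 2 + X (Sum.inr j) ^ 2)
      = if l = j then (2 : Pol N) * X (Sum.inl l) else 0 := by
    intro j
    by_cases h : l = j
    · subst h
      rw [map_add, pderiv_pow, pderiv_pow, pderiv_X_self,
        pderiv_X_of_ne (show (Sum.inr l : Fin N ⊕ Fin N) ≠ Sum.inl l by simp), if_pos rfl]
      norm_num
    · rw [map_add, pderiv_pow, pderiv_pow,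
        pderiv_X_of_ne (show (Sum.inl j : Fin N ⊕ Fin N) ≠ Sum.inl l by simp [Ne.symm h]),
        pderiv_X_of_ne (show (Sum.inr j : Fin N ⊕ Fin N) ≠ Sum.inl l by simp), if_neg h]
      ring
  rw [Finset.sum_congr rfl (fun j _ => step j),
    Finset.sum_ite_eq Finset.univ l (fun _ => (2 : Pol N) * X (Sum.inl l)),
    if_pos (Finset.mem_univ l),
    show (2 : Pol N) = C (2 : ℝ) by rw [map_ofNat], ← mul_assoc, ← C_mul]
  norm_num

lemma pderiv_HOmega_inr {N : ℕ} (Ω : ℝ) (l : Fin N) :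
    pderiv (Sum.inr l) (HOmega N Ω) = C Ω * X (Sum.inr l) := by
  unfold HOmega
  rw [pderiv_C_mul, map_sum]
  have step : ∀ j : Fin N, pderiv (Sum.inr l) ((X (Sum.inl j) : Pol N) ^ 2 + X (Sum.inr j) ^ 2)
      = if l = j then (2 : Pol N) * X (Sum.inr l) else 0 := by
    intro j
    by_cases h : l = j
    · subst h
      rw [map_add, pderiv_pow, pderiv_pow, pderiv_X_self,
        pderiv_X_of_ne (show (Sum.inl l : Fin N ⊕ Fin N) ≠ Sum.inr l by simp), if_pos rfl]
      norm_num
    · rw [map_add, pderiv_pow, pderiv_pow,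
        pderiv_X_of_ne (show (Sum.inr j : Fin N ⊕ Fin N) ≠ Sum.inr l by simp [Ne.symm h]),
        pderiv_X_of_ne (show (Sum.inl j : Fin N ⊕ Fin N) ≠ Sum.inr l by simp), if_neg h]
      ring
  rw [Finset.sum_congr rfl (fun j _ => step j),
    Finset.sum_ite_eq Finset.univ l (fun _ => (2 : Pol N) * X (Sum.inr l)),
    if_pos (Finset.mem_univ l),
    show (2 : Pol N) = C (2 : ℝ) by rw [map_ofNat], ← mul_assoc, ← C_mul]
  norm_num

lemma lOm_eq (N : ℕ) (Ω : ℝ) (f : Pol N) : lOm N Ω f = C Ω * Dop N f := by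
  unfold lOm pbracket Dop
  rw [Finset.mul_sum]
  apply Finset.sum_congr rfl
  intro l _
  rw [pderiv_HOmega_inl, pderiv_HOmega_inr]
  ring

lemma pbracket_C_mul_left {N : ℕ} (a : ℝ) (f g : Pol N) :
    pbracket (C a * f) g = C a * pbracket f g := by
  unfold pbracket
  rw [Finset.mul_sum]
  apply Finset.sum_congr rfl
  intro l _
  rw [pderiv_C_mul, pderiv_C_mul]
  ring

lemma pbracket_C_mul_right {N : ℕ} (a : ℝ) (f g : Pol N) :
    pbracket f (C a * g) = C a * pbracket f g := by
  unfold pbracket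
  rw [Finset.mul_sum]
  apply Finset.sum_congr rfl
  intro l _
  rw [pderiv_C_mul, pderiv_C_mul]
  ring

lemma pbracket_zero_left {N : ℕ} (g : Pol N) : pbracket 0 g = 0 := by
  simp [pbracket]

lemma pbracket_zero_right {N : ℕ} (f : Pol N) : pbracket f 0 = 0 := by
  simp [pbracket]

lemma lOm_pbracket (N : ℕ) (Ω : ℝ) (f g : Pol N) :
    lOm N Ω (pbracket f g) = pbracket (lOm N Ω f) g + pbracket f (lOm N Ω g) := by
  rw [lOm_eq, lOm_eq, lOm_eq, Dop_pbracket, pbracket_C_mul_left, pbracket_C_mul_right, mul_add]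


theorem stmt9 (N : ℕ) (Ω : ℝ) (hΩ : 0 < Ω) (r s : ℕ) (f g : Pol N) :
    (inKer N Ω s f → inKer N Ω r g → inKer N Ω (r + s - 2) (pbracket f g)) ∧
    (inKer N Ω s f → inRan N Ω r g → inRan N Ω (r + s - 2) (pbracket f g)) ∧
    (inRan N Ω s f → inKer N Ω r g → inRan N Ω (r + s - 2) (pbracket f g)) := by
  refine ⟨?_, ?_, ?_⟩
  · rintro ⟨hf, hf0⟩ ⟨hg, hg0⟩
    refine ⟨pbracket_isHomogeneous hf hg, ?_⟩
    rw [lOm_pbracket, hf0, hg0, pbracket_zero_left, pbracket_zero_right, add_zero]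
  · rintro ⟨hf, hf0⟩ ⟨h, hh, hhg⟩
    refine ⟨pbracket f h, pbracket_isHomogeneous hf hh, ?_⟩
    rw [lOm_pbracket, hf0, pbracket_zero_left, zero_add, hhg]
  · rintro ⟨h, hh, hhf⟩ ⟨hg, hg0⟩
    refine ⟨pbracket h g, pbracket_isHomogeneous hh hg, ?_⟩
    rw [lOm_pbracket, hg0, pbracket_zero_right, add_zero, hhf]
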